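/- Let F be a field, d ≥ 2, and R = F[y]/(y^d) graded with y in negative degree. Every finite-dimensional graded R-module M with M ≅ M^∨ (graded dual, with degree negated) has a barcode satisfying: for each size 1 ≤ c ≤ d and each i, the number of bars of size c with barycentre −i equals the number of bars of size c with barycentre +i. -/

import Mathlib

open Module

set_option linter.unusedSectionVars false
set_option linter.unusedVariables false

section Aux

variable {F : Type*} [Field F] {M : Type*} [AddCommGroup M] [Module F M]
  [FiniteDimensional F M] (y : M →ₗ[F] M) (ℳ : ℤ → Submodule F M)
  [DirectSum.Decomposition ℳ] (e : M ≃ₗ[F] Module.Dual F M)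

-- membership of whole space in iSup
omit [FiniteDimensional F M] in
lemma mem_top_iSup (x : M) : x ∈ ⨆ n, ℳ n := by
  rw [(DirectSum.Decomposition.isInternal ℳ).submodule_iSup_eq_top]
  trivial

variable (hegr : ∀ (n : ℤ) (x : M), x ∈ ℳ n → ∀ (m : ℤ) (z : M), z ∈ ℳ m → m ≠ -n →
      e x z = 0)

include hegr in
/-- left nondegeneracy -/
lemma L1 (p : ℤ) (v : M) (hv : v ∈ ℳ p) (h : ∀ z ∈ ℳ (-p), e v z = 0) : v = 0 := by
  have hz : ∀ z : M, e v z = 0 := by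
    intro z
    refine Submodule.iSup_induction (motive := fun z => e v z = 0) ℳ (mem_top_iSup ℳ z) ?_ ?_ ?_
    · intro q w hw
      by_cases hq : q = -p
      · exact h w (hq ▸ hw)
      · exact hegr p v hv q w hw hq
    · simp
    · intro a b ha hb; rw [map_add, ha, hb, add_zero]
  exact (LinearEquiv.map_eq_zero_iff e).mp (LinearMap.ext hz)

include hegr in
/-- right nondegeneracy -/
lemma L2 (p : ℤ) (w : M) (hw : w ∈ ℳ p) (h : ∀ x ∈ ℳ (-p), e x w = 0) : w = 0 := by
  have hx : ∀ x : M, e x w = 0 := by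
    intro x
    refine Submodule.iSup_induction (motive := fun x => e x w = 0) ℳ (mem_top_iSup ℳ x) ?_ ?_ ?_
    · intro q v hv
      by_cases hq : q = -p
      · exact h v (hq ▸ hv)
      · refine hegr q v hv p w hw ?_
        intro hc; exact hq (by omega)
    · simp
    · intro a b ha hb; rw [map_add, LinearMap.add_apply, ha, hb, add_zero]
  rw [← forall_dual_apply_eq_zero_iff F w]
  intro φ
  have := hx (e.symm φ)
  rwa [e.apply_symm_apply] at this

end Aux

section Main

variable {F : Type*} [Field F] {M : Type*} [AddCommGroup M] [Module F M]
  [FiniteDimensional F M] {y : M →ₗ[F] M} {d₀ : ℕ} {ℳ : ℤ → Submodule F M}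
  [DirectSum.Decomposition ℳ] {e : M ≃ₗ[F] Module.Dual F M}

/-- main rank symmetry lemma -/
lemma mainrk
    (hgr : ∀ n : ℤ, (ℳ n).map y ≤ ℳ (n - 2 * d₀))
    (he : ∀ x z : M, e (y x) z = e x (y z))
    (hegr : ∀ (n : ℤ) (x : M), x ∈ ℳ n → ∀ (m : ℤ) (z : M), z ∈ ℳ m → m ≠ -n →
      e x z = 0)
    (k : ℕ) (m : ℤ) :
    finrank F ((ℳ m).map (y ^ k)) =
      finrank F ((ℳ (2 * k * d₀ - m)).map (y ^ k)) := by
  -- iterated grading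
  have hgrk : ∀ (k : ℕ) (n : ℤ) (x : M), x ∈ ℳ n → (y ^ k) x ∈ ℳ (n - 2 * k * d₀) := by
    intro k
    induction k with
    | zero => intro n x hx; simpa using hx
    | succ k ih =>
      intro n x hx
      have h1 : (y ^ (k + 1)) x = y ((y ^ k) x) := by
        rw [pow_succ']; rfl
      have h2 := hgr (n - 2 * k * d₀) ⟨(y ^ k) x, ih n x hx, rfl⟩
      rw [h1]
      convert h2 using 2
      push_cast; ring
  -- iterated adjointness
  have hek : ∀ (k : ℕ) (x z : M), e ((y ^ k) x) z = e x ((y ^ k) z) := by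
    intro k
    induction k with
    | zero => intro x z; rfl
    | succ k ih =>
      intro x z
      have h1 : (y ^ (k + 1)) x = (y ^ k) (y x) := by rw [pow_succ]; rfl
      have h2 : (y ^ (k + 1)) z = y ((y ^ k) z) := by rw [pow_succ']; rfl
      rw [h1, h2, ih, he]
  set n' : ℤ := 2 * k * d₀ - m with hn'
  -- the bilinear pairing B x z = e (y^k x) z on ℳ m × ℳ n'
  set B : ℳ m →ₗ[F] Module.Dual F (ℳ n') :=
    (LinearMap.dualMap (ℳ n').subtype).comp
      ((e : M →ₗ[F] Module.Dual F M).comp ((y ^ k).comp (ℳ m).subtype)) with hB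
  have hBapp : ∀ (x : ℳ m) (z : ℳ n'), B x z = e ((y ^ k) (x : M)) (z : M) := by
    intro x z; rfl
  -- kernels
  have hkerB : LinearMap.ker B = LinearMap.ker ((y ^ k).comp (ℳ m).subtype) := by
    ext x
    simp only [LinearMap.mem_ker, LinearMap.comp_apply, Submodule.coe_subtype]
    constructor
    · intro hx
      refine L1 ℳ e hegr (m - 2 * k * d₀) ((y ^ k) (x : M)) (hgrk k m x x.2) ?_
      intro z hz
      have hz' : z ∈ ℳ n' := by
        convert hz using 2; omega
      have := congrArg (fun f => f ⟨z, hz'⟩) hx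
      simpa [hBapp] using this
    · intro hx
      apply LinearMap.ext
      intro z
      simp [hBapp, hx]
  have hkerBf : LinearMap.ker B.flip = LinearMap.ker ((y ^ k).comp (ℳ n').subtype) := by
    ext z
    simp only [LinearMap.mem_ker, LinearMap.comp_apply, Submodule.coe_subtype]
    constructor
    · intro hz
      have hmem : (y ^ k) (z : M) ∈ ℳ (-m) := by
        have := hgrk k n' z z.2
        convert this using 2; omega
      refine L2 ℳ e hegr (-m) ((y ^ k) (z : M)) hmem ?_
      intro x hx
      have hx' : x ∈ ℳ m := by convert hx using 2; omega
      have := congrArg (fun f => f ⟨x, hx'⟩) hz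
      simp only [LinearMap.flip_apply, hBapp, LinearMap.zero_apply] at this
      rw [← hek]
      exact this
    · intro hz
      apply LinearMap.ext
      intro x
      simp only [LinearMap.flip_apply, hBapp, LinearMap.zero_apply, hek, hz, map_zero]
  -- ranks via flip
  have hrkflip : finrank F (LinearMap.range B) = finrank F (LinearMap.range B.flip) := by
    have hfe : B.flip = B.dualMap.comp (Module.Dual.eval F (ℳ n')) := by
      apply LinearMap.ext; intro z; apply LinearMap.ext; intro x; rfl
    rw [hfe]
    have : LinearMap.range (B.dualMap.comp (Module.Dual.eval F (ℳ n'))) =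
        LinearMap.range B.dualMap := by
      rw [LinearMap.range_comp, ← Module.evalEquiv_toLinearMap,
        LinearEquiv.range, Submodule.map_top]
    rw [this, LinearMap.finrank_range_dualMap_eq_finrank_range]
  -- identify everything
  have hm1 : (ℳ m).map (y ^ k) = LinearMap.range ((y ^ k).comp (ℳ m).subtype) := by
    rw [LinearMap.range_comp, Submodule.range_subtype]
  have hm2 : (ℳ n').map (y ^ k) = LinearMap.range ((y ^ k).comp (ℳ n').subtype) := by
    rw [LinearMap.range_comp, Submodule.range_subtype]
  have r1 := LinearMap.finrank_range_add_finrank_ker B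
  have r2 := LinearMap.finrank_range_add_finrank_ker ((y ^ k).comp (ℳ m).subtype)
  have r3 := LinearMap.finrank_range_add_finrank_ker B.flip
  have r4 := LinearMap.finrank_range_add_finrank_ker ((y ^ k).comp (ℳ n').subtype)
  rw [hkerB] at r1
  rw [hkerBf] at r3
  rw [hm1, hm2]
  omega

end Main

/-- **Barcode symmetry of graded self-dual modules over `F[y]/(y^d)`.**
Let `F` be a field, `d ≥ 2`, and let `M` be a finite-dimensional `F`-vector space with
a grading `ℳ : ℤ → Submodule F M` (a direct sum decomposition) and an operator
`y : M → M` of degree `−2d₀` with `y^d = 0`, making `M` a graded `F[y]/(y^d)`-module.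
Assume `M` is isomorphic to its graded dual: there is `e : M ≃ M^∨` with
`e(yx)(z) = e(x)(yz)` and `e` pairing `ℳ n` only against `ℳ (−n)`.
For `1 ≤ c ≤ d`, the number of bars of size `c` with top degree `m` in the barcode of
`M` is `μ_c(m) := rk(y^{c−1}ℳ_m) − rk(y^c ℳ_{m+2d₀}) − rk(y^c ℳ_m) + rk(y^{c+1} ℳ_{m+2d₀})`,
and a bar `(m,c)` has barycentre `m − (c−1)d₀`.  Then for every size `c` and every
`i : ℤ`, there are as many bars of size `c` with barycentre `−i` as with barycentre `i`,
i.e. `μ_c(−i + (c−1)d₀) = μ_c(i + (c−1)d₀)`. -/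
theorem statement12 (F : Type*) [Field F] (d d₀ : ℕ) (hd : 2 ≤ d) (hd₀ : 1 ≤ d₀)
    (M : Type*) [AddCommGroup M] [Module F M] [FiniteDimensional F M]
    (y : M →ₗ[F] M) (hy : y ^ d = 0)
    (ℳ : ℤ → Submodule F M) [DirectSum.Decomposition ℳ]
    (hgr : ∀ n : ℤ, (ℳ n).map y ≤ ℳ (n - 2 * d₀))
    (e : M ≃ₗ[F] Module.Dual F M)
    (he : ∀ x z : M, e (y x) z = e x (y z))
    (hegr : ∀ (n : ℤ) (x : M), x ∈ ℳ n → ∀ (m : ℤ) (z : M), z ∈ ℳ m → m ≠ -n →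
      e x z = 0) :
    ∀ c : ℕ, 1 ≤ c → c ≤ d → ∀ i : ℤ,
      (fun m : ℤ =>
          (Module.finrank F ((ℳ m).map (y ^ (c - 1))) : ℤ)
            - (Module.finrank F ((ℳ (m + 2 * d₀)).map (y ^ c)) : ℤ)
            - (Module.finrank F ((ℳ m).map (y ^ c)) : ℤ)
            + (Module.finrank F ((ℳ (m + 2 * d₀)).map (y ^ (c + 1))) : ℤ))
          (-i + ((c : ℤ) - 1) * d₀) =
      (fun m : ℤ =>
          (Module.finrank F ((ℳ m).map (y ^ (c - 1))) : ℤ)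
            - (Module.finrank F ((ℳ (m + 2 * d₀)).map (y ^ c)) : ℤ)
            - (Module.finrank F ((ℳ m).map (y ^ c)) : ℤ)
            + (Module.finrank F ((ℳ (m + 2 * d₀)).map (y ^ (c + 1))) : ℤ))
          (i + ((c : ℤ) - 1) * d₀) := by
  intro c hc1 hcd i
  simp only
  have key := mainrk (F := F) (M := M) (y := y) (d₀ := d₀) (ℳ := ℳ) (e := e) hgr he hegr
  have hcast : ((c - 1 : ℕ) : ℤ) = (c : ℤ) - 1 := by omega
  have h1 : (finrank F ((ℳ (-i + ((c : ℤ) - 1) * d₀)).map (y ^ (c - 1))) : ℤ)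
      = (finrank F ((ℳ (i + ((c : ℤ) - 1) * d₀)).map (y ^ (c - 1))) : ℤ) := by
    have harg : 2 * ((c - 1 : ℕ) : ℤ) * d₀ - (-i + ((c : ℤ) - 1) * d₀)
        = i + ((c : ℤ) - 1) * d₀ := by rw [hcast]; ring
    rw [key (c - 1) (-i + ((c : ℤ) - 1) * d₀), harg]
  have h2 : (finrank F ((ℳ (-i + ((c : ℤ) - 1) * d₀ + 2 * d₀)).map (y ^ c)) : ℤ)
      = (finrank F ((ℳ (i + ((c : ℤ) - 1) * d₀)).map (y ^ c)) : ℤ) := by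
    have harg : 2 * (c : ℤ) * d₀ - (-i + ((c : ℤ) - 1) * d₀ + 2 * d₀)
        = i + ((c : ℤ) - 1) * d₀ := by ring
    rw [key c (-i + ((c : ℤ) - 1) * d₀ + 2 * d₀), harg]
  have h3 : (finrank F ((ℳ (-i + ((c : ℤ) - 1) * d₀)).map (y ^ c)) : ℤ)
      = (finrank F ((ℳ (i + ((c : ℤ) - 1) * d₀ + 2 * d₀)).map (y ^ c)) : ℤ) := by
    have harg : 2 * (c : ℤ) * d₀ - (-i + ((c : ℤ) - 1) * d₀)
        = i + ((c : ℤ) - 1) * d₀ + 2 * d₀ := by ring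
    rw [key c (-i + ((c : ℤ) - 1) * d₀), harg]
  have h4 : (finrank F ((ℳ (-i + ((c : ℤ) - 1) * d₀ + 2 * d₀)).map (y ^ (c + 1))) : ℤ)
      = (finrank F ((ℳ (i + ((c : ℤ) - 1) * d₀ + 2 * d₀)).map (y ^ (c + 1))) : ℤ) := by
    have harg : 2 * ((c + 1 : ℕ) : ℤ) * d₀ - (-i + ((c : ℤ) - 1) * d₀ + 2 * d₀)
        = i + ((c : ℤ) - 1) * d₀ + 2 * d₀ := by push_cast; ring
    rw [key (c + 1) (-i + ((c : ℤ) - 1) * d₀ + 2 * d₀), harg]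
  rw [h1, h2, h3, h4]
  ring
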